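/- arXiv:1604.02549 — 7 statements merged into one kernel-verified Lean document; each statement's English description precedes it below -/
import Mathlib

section
/- Let σ be a k-cycle on a finite set, where k ≥ 2 and k ≠ 3. Then there exist a balanced permutation ρ and a nearly balanced permutation τ such that σ = τρ and supp(τ) ∪ supp(ρ) ⊆ supp(σ). -/
open Equiv

/-- A permutation is balanced if for every k ≥ 2 the number of k-cycles in its
cycle decomposition is even. -/
def PermBalanced {X : Type*} [Fintype X] [DecidableEq X] (σ : Equiv.Perm X) : Prop :=
  ∀ k : ℕ, 2 ≤ k → Even (σ.cycleType.count k)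

/-- A permutation is nearly balanced if for every k ≥ 3 the number of k-cycles in
its cycle decomposition is even. -/
def PermNearlyBalanced {X : Type*} [Fintype X] [DecidableEq X] (σ : Equiv.Perm X) : Prop :=
  ∀ k : ℕ, 3 ≤ k → Even (σ.cycleType.count k)

/-- The disjoint sum g + h ∈ S(2 × X): acts as g on {0(=false)} × X and as h on {1(=true)} × X. -/
def dsum {X : Type*} (g h : Equiv.Perm X) : Equiv.Perm (Bool × X) where
  toFun p := (p.1, if p.1 then h p.2 else g p.2)
  invFun p := (p.1, if p.1 then h.symm p.2 else g.symm p.2)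
  left_inv := by rintro ⟨b, x⟩; cases b <;> simp
  right_inv := by rintro ⟨b, x⟩; cases b <;> simp

/-- The factor f × id₂ acting on 2 × A × 2. -/
def leftFactor {A : Type*} (f : Equiv.Perm (Bool × A)) : Equiv.Perm (Bool × A × Bool) :=
  (Equiv.prodAssoc Bool A Bool).permCongr (Equiv.prodCongr f (Equiv.refl Bool))

/-- The factor id₂ × g acting on 2 × A × 2. -/
def rightFactor {A : Type*} (g : Equiv.Perm (A × Bool)) : Equiv.Perm (Bool × A × Bool) :=
  Equiv.prodCongr (Equiv.refl Bool) g

/-- A permutation of 2 × A × 2 is a factor if it is of the form f × id₂ or id₂ × g. -/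
def IsFactor {A : Type*} (π : Equiv.Perm (Bool × A × Bool)) : Prop :=
  (∃ f : Equiv.Perm (Bool × A), π = leftFactor f) ∨
  (∃ g : Equiv.Perm (A × Bool), π = rightFactor g)

/-- σ has alternation depth d if it is a product of d factors. -/
def AltDepth {A : Type*} (σ : Equiv.Perm (Bool × A × Bool)) (d : ℕ) : Prop :=
  ∃ L : List (Equiv.Perm (Bool × A × Bool)),
    L.length = d ∧ (∀ π ∈ L, IsFactor π) ∧ L.prod = σ

section AuxLemmas

open List

variable {α : Type*} [DecidableEq α]

theorem aux_swap_braid {a b c : α} (hab : a ≠ b) (hbc : b ≠ c) (hac : a ≠ c) :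
    Equiv.swap a b * Equiv.swap b c = Equiv.swap a c * Equiv.swap a b := by
  have h : Equiv.swap a c = Equiv.swap a b * Equiv.swap b c * (Equiv.swap a b)⁻¹ := by
    have h2 := Equiv.swap_apply_apply (Equiv.swap a b) b c
    rwa [Equiv.swap_apply_right, Equiv.swap_apply_of_ne_of_ne hac.symm hbc.symm] at h2
  rw [h]
  simp [mul_assoc]

theorem aux_formPerm_append :
    ∀ (l₁ : List α) (a b : α) (l₂ : List α), ((a :: l₁) ++ b :: l₂).Nodup →
    List.formPerm ((a :: l₁) ++ b :: l₂) =
      Equiv.swap a b * (List.formPerm (a :: l₁) * List.formPerm (b :: l₂))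
  | [], a, b, l₂, _ => by simp
  | c :: l₁, a, b, l₂, h => by
    have h' : ((c :: l₁) ++ b :: l₂).Nodup := by
      rw [cons_append] at h
      exact h.of_cons
    have hmem : a ∉ (c :: l₁) ++ b :: l₂ := by
      rw [cons_append] at h
      exact (nodup_cons.mp h).1
    have hac : a ≠ c := by simp at hmem; tauto
    have hab : a ≠ b := by simp at hmem; tauto
    have hcb : c ≠ b := by
      have : c ∉ l₁ ++ b :: l₂ := by
        rw [cons_append] at h'
        exact (nodup_cons.mp h').1
      simp at this; tauto
    calc List.formPerm ((a :: c :: l₁) ++ b :: l₂)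
        = Equiv.swap a c * List.formPerm ((c :: l₁) ++ b :: l₂) := by
          simp only [cons_append, formPerm_cons_cons]
      _ = Equiv.swap a c * (Equiv.swap c b *
            (List.formPerm (c :: l₁) * List.formPerm (b :: l₂))) := by
          rw [aux_formPerm_append l₁ c b l₂ h']
      _ = (Equiv.swap a c * Equiv.swap c b) *
            (List.formPerm (c :: l₁) * List.formPerm (b :: l₂)) := by
          rw [mul_assoc]
      _ = (Equiv.swap a b * Equiv.swap a c) *
            (List.formPerm (c :: l₁) * List.formPerm (b :: l₂)) := by
          rw [aux_swap_braid hac hcb hab]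
      _ = Equiv.swap a b * (List.formPerm (a :: c :: l₁) * List.formPerm (b :: l₂)) := by
          rw [formPerm_cons_cons]
          simp [mul_assoc]

theorem aux_disjoint_formPerm {s t : List α} (h : s.Disjoint t) :
    Equiv.Perm.Disjoint s.formPerm t.formPerm := by
  intro x
  by_cases hx : x ∈ s
  · right; exact formPerm_apply_of_notMem (fun hc => h hx hc)
  · left; exact formPerm_apply_of_notMem hx

variable {X : Type*} [Fintype X] [DecidableEq X]

theorem aux_card_support_formPerm {s : List X} (hs : s.Nodup) (h2 : 2 ≤ s.length) :
    (List.formPerm s).support.card = s.length := by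
  rw [support_formPerm_of_nodup s hs (fun x hx => by subst hx; simp at h2),
    List.toFinset_card_of_nodup hs]

theorem aux_balanced_pair {s t : List X} (hs : s.Nodup) (ht : t.Nodup)
    (hst : s.Disjoint t) (h2 : 2 ≤ s.length) (hlen : s.length = t.length) :
    PermBalanced (s.formPerm * t.formPerm) := by
  intro j hj
  rw [Equiv.Perm.Disjoint.cycleType_mul (aux_disjoint_formPerm hst),
    (List.isCycle_formPerm hs h2).cycleType,
    (List.isCycle_formPerm ht (hlen ▸ h2)).cycleType,
    aux_card_support_formPerm hs h2, aux_card_support_formPerm ht (hlen ▸ h2), hlen,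
    Multiset.count_add]
  exact ⟨_, rfl⟩

theorem aux_nearly_balanced_swap {a b : X} (hab : a ≠ b) :
    PermNearlyBalanced (Equiv.swap a b) := by
  intro j hj
  rw [(Equiv.Perm.isCycle_swap hab).cycleType, Equiv.Perm.card_support_swap hab]
  have : j ≠ 2 := by omega
  simp [this]

theorem aux_nearly_balanced_two_swaps {a b c d : X} (hab : a ≠ b) (hcd : c ≠ d)
    (h : Equiv.Perm.Disjoint (Equiv.swap a b) (Equiv.swap c d)) :
    PermNearlyBalanced (Equiv.swap a b * Equiv.swap c d) := by
  intro j hj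
  rw [Equiv.Perm.Disjoint.cycleType_mul h, (Equiv.Perm.isCycle_swap hab).cycleType,
    (Equiv.Perm.isCycle_swap hcd).cycleType,
    Equiv.Perm.card_support_swap hab, Equiv.Perm.card_support_swap hcd, Multiset.count_add]
  have : j ≠ 2 := by omega
  simp [this]

end AuxLemmas

theorem stmt_1 {X : Type*} [Fintype X] [DecidableEq X] (σ : Equiv.Perm X) (k : ℕ)
    (hk2 : 2 ≤ k) (hk3 : k ≠ 3) (hcyc : σ.IsCycle) (hcard : σ.support.card = k) :
    ∃ ρ τ : Equiv.Perm X, PermBalanced ρ ∧ PermNearlyBalanced τ ∧ σ = τ * ρ ∧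
      τ.support ∪ ρ.support ⊆ σ.support := by
  classical
  obtain ⟨a, ha⟩ : ∃ a, a ∈ σ.support :=
    Finset.card_pos.mp (by rw [hcard]; omega)
  have ha' : σ a ≠ a := Equiv.Perm.mem_support.mp ha
  set l := σ.toList a with hldef
  have hnd : l.Nodup := Equiv.Perm.nodup_toList σ a
  have hfp : l.formPerm = σ := by
    rw [hldef, Equiv.Perm.formPerm_toList, hcyc.cycleOf_eq ha']
  have hlen : l.length = k := by
    rw [hldef, Equiv.Perm.length_toList, hcyc.cycleOf_eq ha', hcard]
  have hsupσ : σ.support = l.toFinset := by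
    rw [← hfp]
    exact List.support_formPerm_of_nodup l hnd
      (fun x hx => by rw [hx] at hlen; simp at hlen; omega)
  rcases Nat.lt_or_ge k 4 with h4 | h4
  · -- k = 2
    have hk : k = 2 := by omega
    refine ⟨1, σ, ?_, ?_, by simp, ?_⟩
    · intro j hj; simp
    · intro j hj
      rw [hcyc.cycleType, hcard, hk]
      have : j ≠ 2 := by omega
      simp [this]
    · simp
  · rcases Nat.even_or_odd k with ⟨m, hm⟩ | ⟨m, hm⟩
    · -- even case, k = m + m, m ≥ 2
      have hm2 : 2 ≤ m := by omega
      obtain ⟨a₁, u, hu⟩ : ∃ x xs, l.take m = x :: xs :=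
        List.exists_cons_of_ne_nil (by
          intro hc
          have := congrArg List.length hc
          rw [List.length_take, hlen] at this
          simp at this; omega)
      obtain ⟨b₁, v, hv⟩ : ∃ x xs, l.drop m = x :: xs :=
        List.exists_cons_of_ne_nil (by
          intro hc
          have := congrArg List.length hc
          rw [List.length_drop, hlen] at this
          simp at this; omega)
      have hl2 : l = (a₁ :: u) ++ (b₁ :: v) := by
        rw [← List.take_append_drop m l, hu, hv]
      have hlen1 : (a₁ :: u).length = m := by
        rw [← hu, List.length_take, hlen]; omega
      have hlen2 : (b₁ :: v).length = m := by
        rw [← hv, List.length_drop, hlen]; omega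
      have hnd2 : ((a₁ :: u) ++ (b₁ :: v)).Nodup := hl2 ▸ hnd
      obtain ⟨hnd1', hnd2', hdisj⟩ := List.nodup_append.mp hnd2
      have hσ : σ = Equiv.swap a₁ b₁ *
          (List.formPerm (a₁ :: u) * List.formPerm (b₁ :: v)) := by
        rw [← hfp, hl2, aux_formPerm_append _ _ _ _ hnd2]
      have hab : a₁ ≠ b₁ := fun hc => hdisj a₁ List.mem_cons_self b₁ List.mem_cons_self hc
      refine ⟨List.formPerm (a₁ :: u) * List.formPerm (b₁ :: v), Equiv.swap a₁ b₁,
        aux_balanced_pair hnd1' hnd2' (fun x hx1 hx2 => hdisj x hx1 x hx2 rfl) (by omega) (by omega),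
        aux_nearly_balanced_swap hab, hσ, ?_⟩
      rw [hsupσ, hl2]
      apply Finset.union_subset
      · rw [Equiv.Perm.support_swap hab]
        intro x hx
        simp only [Finset.mem_insert, Finset.mem_singleton] at hx
        rcases hx with rfl | rfl <;> simp
      · refine (Equiv.Perm.support_mul_le _ _).trans ?_
        intro x hx
        rcases Finset.mem_union.mp hx with hx | hx
        · have := List.support_formPerm_le (a₁ :: u) hx
          simp only [List.mem_toFinset] at this ⊢
          simp at this ⊢
          tauto
        · have := List.support_formPerm_le (b₁ :: v) hx
          simp only [List.mem_toFinset] at this ⊢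
          simp at this ⊢
          tauto
    · -- odd case, k = 2m+1, m ≥ 2
      have hm2 : 2 ≤ m := by omega
      obtain ⟨a₀, l', hl1⟩ : ∃ x xs, l = x :: xs :=
        List.exists_cons_of_ne_nil (by
          intro hc; rw [hc] at hlen; simp at hlen; omega)
      obtain ⟨h₀, t, hl1'⟩ : ∃ x xs, l' = x :: xs :=
        List.exists_cons_of_ne_nil (by
          intro hc; rw [hc] at hl1; rw [hl1] at hlen; simp at hlen; omega)
      have hl2 : l = a₀ :: h₀ :: t := by rw [hl1, hl1']
      have htlen : t.length = 2 * m - 1 := by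
        have := congrArg List.length hl2
        rw [hlen] at this; simp at this; omega
      obtain ⟨c, u, hu⟩ : ∃ x xs, t.take m = x :: xs :=
        List.exists_cons_of_ne_nil (by
          intro hc
          have := congrArg List.length hc
          rw [List.length_take, htlen] at this
          simp at this; omega)
      obtain ⟨d, w, hw⟩ : ∃ x xs, t.drop m = x :: xs :=
        List.exists_cons_of_ne_nil (by
          intro hc
          have := congrArg List.length hc
          rw [List.length_drop, htlen] at this
          simp at this; omega)
      have hlen1 : (c :: u).length = m := by
        rw [← hu, List.length_take, htlen]; omega
      have hlen2 : (d :: (w ++ [h₀])).length = m := by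
        have : (d :: w).length = 2 * m - 1 - m := by rw [← hw, List.length_drop, htlen]
        simp at this ⊢; omega
      have ht' : t ++ [h₀] = (c :: u) ++ (d :: (w ++ [h₀])) := by
        rw [← List.take_append_drop m t, hu, hw]
        simp
      have hndl : (a₀ :: h₀ :: t).Nodup := hl2 ▸ hnd
      have hndht : (h₀ :: t).Nodup := hndl.of_cons
      have hndr : ((c :: u) ++ (d :: (w ++ [h₀]))).Nodup := by
        have h1 : ((h₀ :: t).rotate 1).Nodup := List.nodup_rotate.mpr hndht
        rwa [List.rotate_cons_succ, List.rotate_zero, ht'] at h1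
      obtain ⟨hnd1', hnd2', hdisj⟩ := List.nodup_append.mp hndr
      have hσ : σ = Equiv.swap a₀ h₀ * (Equiv.swap c d *
          (List.formPerm (c :: u) * List.formPerm (d :: (w ++ [h₀])))) := by
        rw [← hfp, hl2, List.formPerm_cons_cons]
        congr 1
        rw [← List.formPerm_rotate_one _ hndht, List.rotate_cons_succ, List.rotate_zero, ht',
          aux_formPerm_append _ _ _ _ hndr]
      -- distinctness
      have ha₀ : a₀ ∉ h₀ :: t := (List.nodup_cons.mp hndl).1
      have hh₀ : h₀ ∉ t := (List.nodup_cons.mp hndht).1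
      have hct : c ∈ t := by
        have : c ∈ t.take m := by rw [hu]; exact List.mem_cons_self
        exact List.mem_of_mem_take this
      have hdt : d ∈ t := by
        have : d ∈ t.drop m := by rw [hw]; exact List.mem_cons_self
        exact List.mem_of_mem_drop this
      have hah : a₀ ≠ h₀ := fun hc => ha₀ (hc ▸ List.mem_cons_self (a := h₀) (l := t))
      have hac : a₀ ≠ c := fun hc => ha₀ (List.mem_cons_of_mem _ (hc ▸ hct))
      have had : a₀ ≠ d := fun hc => ha₀ (List.mem_cons_of_mem _ (hc ▸ hdt))
      have hhc : h₀ ≠ c := fun hc => hh₀ (hc ▸ hct)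
      have hhd : h₀ ≠ d := fun hc => hh₀ (hc ▸ hdt)
      have hcd : c ≠ d := fun hc =>
        hdisj c List.mem_cons_self d List.mem_cons_self hc
      have hswapdisj : Equiv.Perm.Disjoint (Equiv.swap a₀ h₀) (Equiv.swap c d) := by
        rw [Equiv.Perm.disjoint_iff_disjoint_support, Equiv.Perm.support_swap hah,
          Equiv.Perm.support_swap hcd]
        rw [Finset.disjoint_left]
        intro x hx hx'
        simp only [Finset.mem_insert, Finset.mem_singleton] at hx hx'
        rcases hx with rfl | rfl <;> rcases hx' with rfl | rfl <;> tauto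
      refine ⟨List.formPerm (c :: u) * List.formPerm (d :: (w ++ [h₀])),
        Equiv.swap a₀ h₀ * Equiv.swap c d,
        aux_balanced_pair hnd1' hnd2' (fun x hx1 hx2 => hdisj x hx1 x hx2 rfl) (by omega) (by omega),
        aux_nearly_balanced_two_swaps hah hcd hswapdisj, by rw [hσ, mul_assoc], ?_⟩
      have hmemsub : ∀ x, x ∈ (c :: u) ++ (d :: (w ++ [h₀])) → x ∈ l := by
        intro x hx
        rw [← ht'] at hx
        rw [hl2]
        rcases List.mem_append.mp hx with hx | hx
        · exact List.mem_cons_of_mem _ (List.mem_cons_of_mem _ hx)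
        · simp at hx
          rw [hx]
          exact List.mem_cons_of_mem _ List.mem_cons_self
      rw [hsupσ]
      apply Finset.union_subset
      · refine (Equiv.Perm.support_mul_le _ _).trans ?_
        intro x hx
        rcases Finset.mem_union.mp hx with hx | hx
        · rw [Equiv.Perm.support_swap hah] at hx
          simp only [Finset.mem_insert, Finset.mem_singleton] at hx
          rcases hx with rfl | rfl <;> simp [List.mem_toFinset, hl2]
        · rw [Equiv.Perm.support_swap hcd] at hx
          simp only [Finset.mem_insert, Finset.mem_singleton] at hx
          rw [List.mem_toFinset, hl2]
          rcases hx with rfl | rfl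
          · exact List.mem_cons_of_mem _ (List.mem_cons_of_mem _ hct)
          · exact List.mem_cons_of_mem _ (List.mem_cons_of_mem _ hdt)
      · refine (Equiv.Perm.support_mul_le _ _).trans ?_
        intro x hx
        rw [List.mem_toFinset]
        rcases Finset.mem_union.mp hx with hx | hx
        · exact hmemsub x (List.mem_append_left _ (List.mem_toFinset.mp
            (List.support_formPerm_le _ hx)))
        · exact hmemsub x (List.mem_append_right _ (List.mem_toFinset.mp
            (List.support_formPerm_le _ hx)))
end

section
/- Let σ be a disjoint product of two or more 3-cycles. Then there exist balanced permutations ρ, τ such that σ = τρ and supp(τ) ∪ supp(ρ) ⊆ supp(σ). -/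
open Equiv

lemma balanced_prod_aux {X : Type*} [Fintype X] [DecidableEq X] (M : List (Equiv.Perm X))
    (hcyc : ∀ γ ∈ M, γ.IsCycle ∧ γ.support.card = 3)
    (hdisj : M.Pairwise Equiv.Perm.Disjoint) (heven : Even M.length) :
    PermBalanced M.prod := by
  intro k hk
  rw [Equiv.Perm.cycleType_eq M rfl (fun γ h => (hcyc γ h).1) hdisj]
  have hrep : M.map (Finset.card ∘ Equiv.Perm.support) = List.replicate M.length 3 := by
    have := List.eq_replicate_of_mem (l := M.map (Finset.card ∘ Equiv.Perm.support)) (a := 3)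
      (by rintro x hx
          simp only [List.mem_map] at hx
          obtain ⟨γ, hγ, rfl⟩ := hx
          exact (hcyc γ hγ).2)
    simpa using this
  rw [hrep, Multiset.coe_replicate, Multiset.count_replicate]
  split_ifs with h
  · exact heven
  · exact Even.zero

lemma key_eq {G : Type*} [Group G] (a b c p : G)
    (hab : Commute a b) (hac : Commute a c) (hap : Commute a p)
    (hbc : Commute b c) (hbp : Commute b p) (hb : b * (b * b) = 1) :
    a * (b * (c * p)) = (b⁻¹ * c) * (a * (b⁻¹ * p)) := by
  have hbinv : b⁻¹ = b * b := inv_eq_of_mul_eq_one_right hb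
  have hb3 : ∀ x : G, b * (b * (b * x)) = x := by
    intro x; rw [← mul_assoc, ← mul_assoc, mul_assoc b b b, hb, one_mul]
  rw [hbinv]
  simp only [mul_assoc, hab.eq, hac.eq, hap.eq, hbc.eq, hbp.eq,
    hab.left_comm, hac.left_comm, hap.left_comm, hbc.left_comm, hbp.left_comm, hb3]

theorem stmt_3 {X : Type*} [Fintype X] [DecidableEq X] (σ : Equiv.Perm X)
    (L : List (Equiv.Perm X)) (hlen : 2 ≤ L.length)
    (hcyc : ∀ γ ∈ L, γ.IsCycle ∧ γ.support.card = 3)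
    (hdisj : L.Pairwise Equiv.Perm.Disjoint) (hσ : σ = L.prod) :
    ∃ ρ τ : Equiv.Perm X, PermBalanced ρ ∧ PermBalanced τ ∧ σ = τ * ρ ∧
      τ.support ∪ ρ.support ⊆ σ.support := by
  rcases Nat.even_or_odd L.length with he | ho
  · refine ⟨σ, 1, ?_, ?_, by simp, by simp⟩
    · subst hσ; exact balanced_prod_aux L hcyc hdisj he
    · intro k hk; simp [Equiv.Perm.cycleType_one]
  · rcases L with (_ | ⟨a, (_ | ⟨b, (_ | ⟨c, R⟩)⟩)⟩)
    · simp at hlen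
    · simp at hlen
    · simp [Nat.odd_iff] at ho
    · -- extract disjointness facts
      rw [List.pairwise_cons] at hdisj
      obtain ⟨haD, hdisj⟩ := hdisj
      rw [List.pairwise_cons] at hdisj
      obtain ⟨hbD, hdisj⟩ := hdisj
      rw [List.pairwise_cons] at hdisj
      obtain ⟨hcD, hR⟩ := hdisj
      have hab : Equiv.Perm.Disjoint a b := haD b (by simp)
      have hac : Equiv.Perm.Disjoint a c := haD c (by simp)
      have hbc : Equiv.Perm.Disjoint b c := hbD c (by simp)
      have haR : ∀ γ ∈ R, Equiv.Perm.Disjoint a γ := fun γ h => haD γ (by simp [h])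
      have hbR : ∀ γ ∈ R, Equiv.Perm.Disjoint b γ := fun γ h => hbD γ (by simp [h])
      have hcR : ∀ γ ∈ R, Equiv.Perm.Disjoint c γ := hcD
      have haP : Equiv.Perm.Disjoint a R.prod := Equiv.Perm.disjoint_prod_right R haR
      have hbP : Equiv.Perm.Disjoint b R.prod := Equiv.Perm.disjoint_prod_right R hbR
      have hcP : Equiv.Perm.Disjoint c R.prod := Equiv.Perm.disjoint_prod_right R hcR
      have ha := hcyc a (by simp)
      have hb := hcyc b (by simp)
      have hc := hcyc c (by simp)
      have hbinv : (b⁻¹).IsCycle ∧ (b⁻¹).support.card = 3 :=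
        ⟨hb.1.inv, by rw [Equiv.Perm.support_inv]; exact hb.2⟩
      have hb3 : b * (b * b) = 1 := by
        have h1 : orderOf b = 3 := by rw [hb.1.orderOf, hb.2]
        have h2 := pow_orderOf_eq_one b
        rw [h1] at h2
        simpa [pow_succ, mul_assoc] using h2
      -- the lists
      let Lρ : List (Equiv.Perm X) := a :: b⁻¹ :: R
      let Lτ : List (Equiv.Perm X) := [b⁻¹, c]
      have hρcyc : ∀ γ ∈ Lρ, γ.IsCycle ∧ γ.support.card = 3 := by
        intro γ hγ
        simp only [Lρ, List.mem_cons] at hγ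
        rcases hγ with rfl | rfl | h
        · exact ha
        · exact hbinv
        · exact hcyc γ (by simp [h])
      have hρdisj : Lρ.Pairwise Equiv.Perm.Disjoint := by
        refine List.Pairwise.cons ?_ (List.Pairwise.cons ?_ hR)
        · intro γ hγ
          simp only [List.mem_cons] at hγ
          rcases hγ with rfl | h
          · exact hab.inv_right
          · exact haR γ h
        · intro γ hγ
          exact (hbR γ hγ).inv_left
      have hτcyc : ∀ γ ∈ Lτ, γ.IsCycle ∧ γ.support.card = 3 := by
        intro γ hγ
        simp only [Lτ, List.mem_cons] at hγ
        rcases hγ with rfl | rfl | h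
        · exact hbinv
        · exact hc
        · exact absurd h List.not_mem_nil
      have hτdisj : Lτ.Pairwise Equiv.Perm.Disjoint := by
        refine List.Pairwise.cons ?_ (by simp)
        intro γ hγ
        simp at hγ; subst hγ
        exact hbc.inv_left
      have hρlen : Even Lρ.length := by
        simp only [Lρ, List.length_cons] at *
        simp only [Nat.even_iff, Nat.odd_iff] at *
        omega
      refine ⟨Lρ.prod, Lτ.prod, balanced_prod_aux Lρ hρcyc hρdisj hρlen,
        balanced_prod_aux Lτ hτcyc hτdisj (by simp [Lτ]), ?_, ?_⟩
      · -- σ = τ * ρ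
        have : σ = a * (b * (c * R.prod)) := by simpa [List.prod_cons] using hσ
        rw [this]
        simp only [Lρ, Lτ, List.prod_cons, List.prod_nil, mul_one]
        rw [← mul_assoc a b⁻¹]
        exact key_eq a b c R.prod hab.commute hac.commute haP.commute hbc.commute hbP.commute hb3
      · -- supports
        have hσsupp : σ.support = a.support ∪ (b.support ∪ (c.support ∪ R.prod.support)) := by
          rw [hσ]
          simp only [List.prod_cons]
          rw [(hab.mul_right (hac.mul_right haP)).support_mul,
            (hbc.mul_right hbP).support_mul, hcP.support_mul]
        have hτ : Lτ.prod.support ⊆ b.support ∪ c.support := by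
          simp only [Lτ, List.prod_cons, List.prod_nil, mul_one]
          intro x hx
          have := Equiv.Perm.support_mul_le b⁻¹ c hx
          simpa [Equiv.Perm.support_inv] using this
        have hρ : Lρ.prod.support ⊆ a.support ∪ (b.support ∪ R.prod.support) := by
          simp only [Lρ, List.prod_cons]
          intro x hx
          rcases Finset.mem_union.1 (Equiv.Perm.support_mul_le a (b⁻¹ * R.prod) hx) with h | h
          · exact Finset.mem_union_left _ h
          · refine Finset.mem_union_right _ ?_
            have := Equiv.Perm.support_mul_le b⁻¹ R.prod h
            simpa [Equiv.Perm.support_inv] using this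
        intro x hx
        rw [hσsupp]
        rcases Finset.mem_union.1 hx with h | h
        · have := hτ h
          simp only [Finset.mem_union] at this ⊢
          tauto
        · have := hρ h
          simp only [Finset.mem_union] at this ⊢
          tauto
end

section
/- Let σ be a 3-cycle in S(X), where |X| ≥ 5. Then there exist balanced permutations ρ, τ such that σ = τρ. -/
open Equiv

lemma bal_two_swaps {X : Type*} [Fintype X] [DecidableEq X] {a b d e : X}
    (hab : a ≠ b) (hde : d ≠ e)
    (hdisj : Equiv.Perm.Disjoint (Equiv.swap a b) (Equiv.swap d e)) :
    PermBalanced (Equiv.swap a b * Equiv.swap d e) := by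
  intro k hk
  rw [hdisj.cycleType_mul, (Equiv.Perm.isCycle_swap hab).cycleType,
    (Equiv.Perm.isCycle_swap hde).cycleType, Equiv.Perm.card_support_swap hab,
    Equiv.Perm.card_support_swap hde]
  rw [Multiset.count_add]; exact Even.add_self _

theorem stmt_5 {X : Type*} [Fintype X] [DecidableEq X] (hX : 5 ≤ Fintype.card X)
    (σ : Equiv.Perm X) (hcyc : σ.IsCycle) (hcard : σ.support.card = 3) :
    ∃ ρ τ : Equiv.Perm X, PermBalanced ρ ∧ PermBalanced τ ∧ σ = τ * ρ := by
  obtain ⟨a, ha, -⟩ := id hcyc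
  set b := σ a with hb
  set c := σ b with hc
  have hab : a ≠ b := fun h => ha h.symm
  have hbmem : b ∈ σ.support := Equiv.Perm.apply_mem_support.2 (Equiv.Perm.mem_support.2 ha)
  have hbc : b ≠ c := fun h => (Equiv.Perm.mem_support.1 hbmem) h.symm
  have hσ3 : σ ^ 3 = 1 := by
    have : orderOf σ = 3 := by rw [hcyc.orderOf, hcard]
    rw [← this]; exact pow_orderOf_eq_one σ
  have hca : σ c = a := by
    have h3 : (σ ^ 3) a = a := by rw [hσ3]; rfl
    have h4 : (σ ^ 3) a = σ (σ (σ a)) := by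
      rw [pow_succ, pow_succ, pow_one]; rfl
    rw [hc, hb, ← h4, h3]
  have hac : a ≠ c := by
    intro h
    have h2 : σ c = c := h ▸ hca
    exact ha (by rw [hb, h, h2])
  have hcmem : c ∈ σ.support := Equiv.Perm.mem_support.2 (by rw [hca]; exact hac)
  have hamem : a ∈ σ.support := Equiv.Perm.mem_support.2 ha
  have hsupp : σ.support = {a, b, c} := by
    refine Finset.eq_of_superset_of_card_ge ?_ ?_
    · intro x hx
      simp only [Finset.mem_insert, Finset.mem_singleton] at hx
      rcases hx with rfl | rfl | rfl <;> assumption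
    · rw [hcard, Finset.card_insert_of_notMem (by simp [hab, hac]),
        Finset.card_insert_of_notMem (by simp [hbc]), Finset.card_singleton]
  -- pick d e outside the support
  have hcompl : 2 ≤ σ.supportᶜ.card := by
    have := Finset.card_compl σ.support
    omega
  obtain ⟨d, hd, e, he, hde⟩ := Finset.one_lt_card.1 (by omega : 1 < σ.supportᶜ.card)
  have hd' : d ∉ σ.support := Finset.mem_compl.1 hd
  have he' : e ∉ σ.support := Finset.mem_compl.1 he
  have hda : d ≠ a := fun h => hd' (h ▸ hamem)
  have hdb : d ≠ b := fun h => hd' (h ▸ hbmem)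
  have hdc : d ≠ c := fun h => hd' (h ▸ hcmem)
  have hea : e ≠ a := fun h => he' (h ▸ hamem)
  have heb : e ≠ b := fun h => he' (h ▸ hbmem)
  have hec : e ≠ c := fun h => he' (h ▸ hcmem)
  have hdisj1 : Equiv.Perm.Disjoint (Equiv.swap a b) (Equiv.swap d e) := by
    intro x
    by_cases h1 : x = d
    · left; subst h1; rw [Equiv.swap_apply_of_ne_of_ne hda hdb]
    · by_cases h2 : x = e
      · left; subst h2; rw [Equiv.swap_apply_of_ne_of_ne hea heb]
      · right; rw [Equiv.swap_apply_of_ne_of_ne h1 h2]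
  have hdisj2 : Equiv.Perm.Disjoint (Equiv.swap a c) (Equiv.swap d e) := by
    intro x
    by_cases h1 : x = d
    · left; subst h1; rw [Equiv.swap_apply_of_ne_of_ne hda hdc]
    · by_cases h2 : x = e
      · left; subst h2; rw [Equiv.swap_apply_of_ne_of_ne hea hec]
      · right; rw [Equiv.swap_apply_of_ne_of_ne h1 h2]
  refine ⟨Equiv.swap a b * Equiv.swap d e, Equiv.swap a c * Equiv.swap d e,
    bal_two_swaps hab hde hdisj1, bal_two_swaps hac hde hdisj2, ?_⟩
  have hcomm : Equiv.swap d e * Equiv.swap a b = Equiv.swap a b * Equiv.swap d e :=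
    (hdisj1.symm.commute).eq
  have key : Equiv.swap a c * Equiv.swap d e * (Equiv.swap a b * Equiv.swap d e)
      = Equiv.swap a c * Equiv.swap a b := by
    rw [mul_assoc, ← mul_assoc (Equiv.swap d e), hcomm, mul_assoc, Equiv.swap_mul_self, mul_one]
  rw [key]
  ext x
  rw [Equiv.Perm.mul_apply]
  by_cases h1 : x = a
  · subst h1
    rw [Equiv.swap_apply_left, Equiv.swap_apply_of_ne_of_ne (fun h => hab h.symm) hbc, ← hb]
  · by_cases h2 : x = b
    · subst h2
      rw [Equiv.swap_apply_right, Equiv.swap_apply_left, ← hc]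
    · by_cases h3 : x = c
      · subst h3
        rw [Equiv.swap_apply_of_ne_of_ne (fun h => hac h.symm) (fun h => hbc h.symm),
          Equiv.swap_apply_right, hca]
      · have hx : x ∉ σ.support := by
          rw [hsupp]; simp [h1, h2, h3]
        rw [Equiv.swap_apply_of_ne_of_ne h1 h2, Equiv.swap_apply_of_ne_of_ne h1 h3,
          Equiv.Perm.notMem_support.1 hx]
end

section
/- Let A be a finite set and τ ∈ S(A × 2) be a balanced permutation. Then there exist permutations g ∈ S(A × 2) and h ∈ S(A) such that τ = g⁻¹ (h × id₂) g. -/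
open Equiv

def fiberEquiv {A : Type*} (b : Bool) : A ≃ {x : A × Bool // x.2 = b} where
  toFun a := ⟨(a, b), rfl⟩
  invFun x := x.1.1
  left_inv a := rfl
  right_inv x := by rcases x with ⟨⟨a, c⟩, h⟩; cases h; rfl

lemma extendDomain_fiber_apply {A : Type*} (h : Equiv.Perm A) (b : Bool) (a : A) :
    h.extendDomain (fiberEquiv b) (a, b) = (h a, b) := by
  rw [Equiv.Perm.extendDomain_apply_subtype (p := fun x : A × Bool => x.2 = b) _ _ rfl]
  rfl

lemma extendDomain_fiber_apply_ne {A : Type*} (h : Equiv.Perm A) {b c : Bool} (hbc : c ≠ b)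
    (a : A) : h.extendDomain (fiberEquiv b) (a, c) = (a, c) :=
  Equiv.Perm.extendDomain_apply_not_subtype _ _ hbc

lemma prodCongr_eq_mul {A : Type*} (h : Equiv.Perm A) :
    Equiv.prodCongr h (Equiv.refl Bool) =
      (h.extendDomain (fiberEquiv false)) * (h.extendDomain (fiberEquiv true)) := by
  apply Equiv.ext
  rintro ⟨a, b⟩
  cases b
  · show ((h a, false) : A × Bool) = _
    rw [Equiv.Perm.mul_apply,
      show (h.extendDomain (fiberEquiv true)) (a, false) = (a, false) from
        extendDomain_fiber_apply_ne h (by simp) a,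
      extendDomain_fiber_apply]
  · show ((h a, true) : A × Bool) = _
    rw [Equiv.Perm.mul_apply, extendDomain_fiber_apply,
      show (h.extendDomain (fiberEquiv false)) (h a, true) = (h a, true) from
        extendDomain_fiber_apply_ne h (by simp) (h a)]

lemma disjoint_fibers {A : Type*} (h : Equiv.Perm A) :
    Equiv.Perm.Disjoint (h.extendDomain (fiberEquiv (A := A) false))
      (h.extendDomain (fiberEquiv true)) := by
  rintro ⟨a, b⟩
  cases b
  · right; exact extendDomain_fiber_apply_ne h (by simp) a
  · left; exact extendDomain_fiber_apply_ne h (by simp) a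

lemma cycleType_prodCongr {A : Type*} [Fintype A] [DecidableEq A] (h : Equiv.Perm A) :
    Equiv.Perm.cycleType (Equiv.prodCongr h (Equiv.refl Bool)) = 2 • h.cycleType := by
  rw [prodCongr_eq_mul, Equiv.Perm.Disjoint.cycleType_mul (disjoint_fibers h),
    Equiv.Perm.cycleType_extendDomain, Equiv.Perm.cycleType_extendDomain, two_nsmul]

theorem stmt_8 {A : Type*} [Fintype A] [DecidableEq A] (τ : Equiv.Perm (A × Bool))
    (hτ : PermBalanced τ) :
    ∃ (g : Equiv.Perm (A × Bool)) (h : Equiv.Perm A),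
      τ = g⁻¹ * Equiv.prodCongr h (Equiv.refl Bool) * g := by
  obtain ⟨m, hm⟩ := Multiset.exists_smul_of_dvd_count τ.cycleType (k := 2)
    (fun a ha => (hτ a (Equiv.Perm.two_le_of_mem_cycleType ha)).two_dvd)
  have hside : m.sum ≤ Fintype.card A ∧ ∀ a ∈ m, 2 ≤ a := by
    constructor
    · have h1 : (2 • m).sum ≤ Fintype.card (A × Bool) := by
        rw [← hm, Equiv.Perm.sum_cycleType]
        exact (Equiv.Perm.support τ).card_le_univ
      rw [two_nsmul, Multiset.sum_add, Fintype.card_prod, Fintype.card_bool] at h1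
      omega
    · intro a ha
      have : a ∈ Equiv.Perm.cycleType τ := by
        rw [hm, two_nsmul]
        exact Multiset.mem_add.mpr (Or.inl ha)
      exact Equiv.Perm.two_le_of_mem_cycleType this
  obtain ⟨h, hh⟩ := (Equiv.Perm.exists_with_cycleType_iff A (m := m)).mpr hside
  have hconj : IsConj (Equiv.prodCongr h (Equiv.refl Bool)) τ := by
    rw [Equiv.Perm.isConj_iff_cycleType_eq, cycleType_prodCongr, hh, hm]
  obtain ⟨c, hc⟩ := isConj_iff.mp hconj
  refine ⟨c⁻¹, h, ?_⟩
  rw [inv_inv, ← hc]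
end

section
/- Let c be a regular coloring of 2 × A × 2 (A finite). Then there exists g ∈ S(A × 2) such that (id₂ × g) · c is symmetric. -/
open Equiv

lemma cycleType_of_involution {X : Type*} [Fintype X] [DecidableEq X]
    (π : Equiv.Perm X) (h2 : π * π = 1) (hff : ∀ x, π x ≠ x) :
    π.cycleType = Multiset.replicate (Fintype.card X / 2) 2 := by
  have horder : orderOf π ∣ 2 := orderOf_dvd_of_pow_eq_one (by simpa [pow_two] using h2)
  have hall : ∀ n ∈ π.cycleType, n = 2 := by
    intro n hn
    have h2n := Equiv.Perm.two_le_of_mem_cycleType hn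
    have hdvd : n ∣ 2 := (Equiv.Perm.dvd_of_mem_cycleType hn).trans horder
    have := Nat.le_of_dvd (by norm_num) hdvd
    omega
  have hsupp : π.support = Finset.univ :=
    Finset.eq_univ_iff_forall.mpr fun x => Equiv.Perm.mem_support.mpr (hff x)
  have hsum : π.cycleType.sum = Fintype.card X := by
    rw [Equiv.Perm.sum_cycleType, hsupp, Finset.card_univ]
  have hrep : π.cycleType = Multiset.replicate (Multiset.card π.cycleType) 2 :=
    Multiset.eq_replicate.mpr ⟨rfl, hall⟩
  have hcard : 2 * Multiset.card π.cycleType = Fintype.card X := by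
    have := hsum
    rw [hrep] at this
    simpa [Multiset.sum_replicate, mul_comm] using this
  rw [hrep]; congr 1; omega

noncomputable def flipB : Equiv.Perm Bool := Function.Involutive.toPerm Bool.not Bool.not_not

@[simp] lemma flipB_apply (b : Bool) : flipB b = !b := rfl

theorem stmt_16 {A : Type*} [Fintype A] [DecidableEq A] (c : Bool × A × Bool → Bool)
    (hreg : ∀ i j : Bool,
      Even (Finset.univ.filter fun x : A × Bool =>
        c (false, x) = i ∧ c (true, x) = j).card) :
    ∃ g : Equiv.Perm (A × Bool), ∀ (i : Bool) (a : A),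
      c ((rightFactor g)⁻¹ (i, a, false)) = c ((rightFactor g)⁻¹ (i, a, true)) := by
  classical
  set p : A × Bool → Bool × Bool := fun x => (c (false, x), c (true, x)) with hp
  have hcard : ∀ y : Bool × Bool, Even (Fintype.card {x : A × Bool // p x = y}) := by
    rintro ⟨i, j⟩
    have := hreg i j
    rw [Fintype.card_subtype]
    convert this using 2
    ext x
    simp [hp, Prod.ext_iff]
  -- equivalences of fibers with Fin m × Bool
  have hE : ∀ y : Bool × Bool,
      {x : A × Bool // p x = y} ≃ (Fin (Fintype.card {x : A × Bool // p x = y} / 2) × Bool) := by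
    intro y
    apply Fintype.equivOfCardEq
    obtain ⟨m, hm⟩ := hcard y
    simp only [Fintype.card_prod, Fintype.card_fin, Fintype.card_bool]
    omega
  set e := hE with he
  -- involution within each fiber
  set F : ∀ y : Bool × Bool, Equiv.Perm {x : A × Bool // p x = y} :=
    fun y => (e y).symm.permCongr (Equiv.prodCongr (Equiv.refl _) flipB) with hF
  have hFff : ∀ y z, F y z ≠ z := by
    intro y z h
    have := congrArg (e y) h
    simp [hF, Equiv.permCongr_apply] at this
    exact Bool.not_ne_self _ (congrArg Prod.snd this)
  have hF2 : ∀ y z, F y (F y z) = z := by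
    intro y z
    apply (e y).injective
    simp [hF, Equiv.permCongr_apply, Prod.ext_iff]
  set τ0 : Equiv.Perm (Σ y : Bool × Bool, {x : A × Bool // p x = y}) :=
    Equiv.sigmaCongrRight F with hτ0
  set sFE := Equiv.sigmaFiberEquiv p with hsFE
  set τ : Equiv.Perm (A × Bool) := (sFE.symm.trans τ0).trans sFE with hτ
  have hτapp : ∀ x : A × Bool, τ x = (F (p x) ⟨x, rfl⟩).val := by
    intro x
    simp [hτ, hτ0, hsFE, Equiv.sigmaCongrRight, Equiv.sigmaFiberEquiv]
  have hτp : ∀ x, p (τ x) = p x := by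
    intro x
    rw [hτapp]
    exact (F (p x) ⟨x, rfl⟩).prop
  have hτff : ∀ x, τ x ≠ x := by
    intro x h
    rw [hτapp] at h
    exact hFff (p x) ⟨x, rfl⟩ (Subtype.ext h)
  have hτ2 : τ * τ = 1 := by
    apply Equiv.ext
    intro z
    have : ∀ w, τ0 (τ0 w) = w := by
      rintro ⟨y, v⟩
      simp [hτ0, Equiv.sigmaCongrRight, hF2]
    simp [hτ, Equiv.Perm.mul_apply, this]
  set σ : Equiv.Perm (A × Bool) := Equiv.prodCongr (Equiv.refl A) flipB with hσ
  have hσ2 : σ * σ = 1 := by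
    apply Equiv.ext
    rintro ⟨a, b⟩
    simp [hσ, Equiv.Perm.mul_apply]
  have hσff : ∀ x, σ x ≠ x := by
    rintro ⟨a, b⟩ h
    exact Bool.not_ne_self b (congrArg Prod.snd h)
  have hconj : IsConj σ τ := by
    rw [Equiv.Perm.isConj_iff_cycleType_eq,
      cycleType_of_involution σ hσ2 hσff, cycleType_of_involution τ hτ2 hτff]
  obtain ⟨h, hh⟩ := isConj_iff.mp hconj
  refine ⟨h⁻¹, ?_⟩
  have key : ∀ x : A × Bool, p (h (σ x)) = p (h x) := by
    intro x
    have : h (σ x) = τ (h x) := by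
      have := congrArg (fun π : Equiv.Perm (A × Bool) => π (h x)) hh
      simpa [Equiv.Perm.mul_apply] using this
    rw [this, hτp]
  intro i a
  have hk := key (a, false)
  have hσaf : σ (a, false) = (a, true) := by simp [hσ]
  rw [hσaf] at hk
  have : (rightFactor h⁻¹)⁻¹ = rightFactor h := by
    simp [rightFactor, Equiv.Perm.inv_def, Equiv.prodCongr_symm]
  rw [this]
  have h0 : c (false, h (a, true)) = c (false, h (a, false)) := congrArg Prod.fst hk
  have h1 : c (true, h (a, true)) = c (true, h (a, false)) := congrArg Prod.snd hk
  cases i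
  · simpa [rightFactor] using h0.symm
  · simpa [rightFactor] using h1.symm
end

section
/- Let A be a finite set with |A| ≥ 3 and c a fair coloring of 2 × A × 2. Then there exists a permutation σ ∈ S(2 × A × 2) of alternation depth at most 4 such that σ · c is the standard coloring. -/
open Equiv

namespace Aux17

abbrev KK := Bool × Bool

def pick {α : Type*} (b : Bool) (p : α × α) : α := bif b then p.2 else p.1

@[simp] lemma pick_false {α : Type*} (p : α × α) : pick false p = p.1 := rfl
@[simp] lemma pick_true {α : Type*} (p : α × α) : pick true p = p.2 := rfl

def Gm (i : Bool) (q : KK × KK) : KK := (pick i q.1, pick i q.2)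

def w1 (q : KK × KK) (k : KK) : ℕ :=
  (if q.1 = k then 1 else 0) + (if q.2 = k then 1 else 0)
def w2 (q : KK × KK) (k : KK) : ℕ :=
  (if Gm false q = k then 1 else 0) + (if Gm true q = k then 1 else 0)
def w3 (k : KK) : ℕ := (if k.1 = true then 1 else 0) + (if k.2 = true then 1 else 0)

lemma pick_comm (i y : Bool) (q : KK × KK) : pick i (pick y q) = pick y (Gm i q) := by
  cases i <;> cases y <;> rfl

lemma sum_comp' {A Q : Type*} [Fintype A] [DecidableEq A] [Fintype Q] [DecidableEq Q]
    (t : A → Q) (g : Q → ℕ) :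
    ∑ a, g (t a) = ∑ q, (Finset.univ.filter fun a => t a = q).card * g q := by
  rw [← Finset.sum_fiberwise Finset.univ t (fun a => g (t a))]
  refine Finset.sum_congr rfl fun q _ => ?_
  calc ∑ a ∈ Finset.univ.filter (fun a => t a = q), g (t a)
      = ∑ a ∈ Finset.univ.filter (fun a => t a = q), g q :=
        Finset.sum_congr rfl (fun a ha => by rw [(Finset.mem_filter.mp ha).2])
    _ = _ := by rw [Finset.sum_const, smul_eq_mul]

lemma card_filter_right {A Q K' : Type*} [Fintype A] [DecidableEq A] [Fintype Q] [DecidableEq Q]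
    [DecidableEq K'] (t : A → Q) (H : Q → Bool → K') (k : K') :
    (Finset.univ.filter fun m : A × Bool => H (t m.1) m.2 = k).card
      = ∑ q, (Finset.univ.filter fun a => t a = q).card *
          ((if H q false = k then 1 else 0) + (if H q true = k then 1 else 0)) := by
  rw [Finset.card_filter, Fintype.sum_prod_type]
  have h1 : ∀ a : A, (∑ y : Bool, if H (t a) y = k then 1 else 0)
      = ((if H (t a) false = k then 1 else 0) + (if H (t a) true = k then 1 else 0)) := by
    intro a; rw [Fintype.sum_bool]; ring
  rw [Finset.sum_congr rfl fun a _ => h1 a]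
  exact sum_comp' t (fun q => (if H q false = k then 1 else 0) + (if H q true = k then 1 else 0))

lemma card_filter_left {A Q K' : Type*} [Fintype A] [DecidableEq A] [Fintype Q] [DecidableEq Q]
    [DecidableEq K'] (t : A → Q) (H : Q → Bool → K') (k : K') :
    (Finset.univ.filter fun z : Bool × A => H (t z.2) z.1 = k).card
      = ∑ q, (Finset.univ.filter fun a => t a = q).card *
          ((if H q false = k then 1 else 0) + (if H q true = k then 1 else 0)) := by
  rw [Finset.card_filter, Fintype.sum_prod_type, Fintype.sum_bool, ← Finset.sum_add_distrib]
  have h1 : ∀ a : A, ((if H (t a) true = k then 1 else 0) + (if H (t a) false = k then 1 else 0))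
      = ((if H (t a) false = k then 1 else 0) + (if H (t a) true = k then 1 else 0)) := by
    intro a; ring
  rw [Finset.sum_congr rfl fun a _ => h1 a]
  exact sum_comp' t (fun q => (if H q false = k then 1 else 0) + (if H q true = k then 1 else 0))

lemma bool_filter_split {Y : Type*} [Fintype Y] [DecidableEq Y] (f : Y → Bool) :
    (Finset.univ.filter fun y => f y = false).card
      + (Finset.univ.filter fun y => f y = true).card = Fintype.card Y := by
  have h := Finset.card_filter_add_card_filter_not
    (s := (Finset.univ : Finset Y)) (p := fun y => f y = false)
  have h2 : (Finset.univ.filter fun y => f y = true)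
      = (Finset.univ.filter fun a => ¬ f a = false) := by
    apply Finset.filter_congr; intro y _; simp
  rw [h2, h, Finset.card_univ]

lemma exists_fn_fibers {A K : Type*} [Fintype A] [DecidableEq A] [Fintype K] [DecidableEq K]
    [Nonempty K] (κ : K → ℕ) (h : ∑ k, κ k = Fintype.card A) :
    ∃ t : A → K, ∀ k, (Finset.univ.filter fun a => t a = k).card = κ k := by
  have hcard : Fintype.card A = Fintype.card (Σ k : K, Fin (κ k)) := by
    simp [Fintype.card_sigma, h]
  obtain ψ := Fintype.equivOfCardEq hcard
  refine ⟨fun a => (ψ a).1, fun k => ?_⟩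
  have h1 : (Finset.univ.filter fun a => (ψ a).1 = k).card
      = Fintype.card {a : A // (ψ a).1 = k} := (Fintype.card_subtype _).symm
  have h2 : Fintype.card {a : A // (ψ a).1 = k}
      = Fintype.card {x : Σ k : K, Fin (κ k) // x.1 = k} :=
    Fintype.card_congr (ψ.subtypeEquiv (fun a => Iff.rfl))
  have h3 : Fintype.card {x : Σ k : K, Fin (κ k) // x.1 = k} = κ k := by
    rw [Fintype.card_subtype]
    rw [Finset.card_filter]
    rw [show (Finset.univ : Finset ((j:K) × Fin (κ j)))
        = Finset.univ.sigma (fun _ => Finset.univ) from rfl, Finset.sum_sigma]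
    have h4 : ∀ x : K, (∑ _ : Fin (κ x), if x = k then 1 else 0)
        = if x = k then κ x else 0 := by
      intro x; by_cases hx : x = k <;> simp [hx]
    rw [Finset.sum_congr rfl fun x _ => h4 x, Finset.sum_ite_eq' Finset.univ k κ]
    simp
  rw [h1, h2, h3]

lemma exists_perm_comp {M K : Type*} [Fintype M] [DecidableEq M] [Fintype K] [DecidableEq K]
    (φ ψ : M → K)
    (h : ∀ k, (Finset.univ.filter fun m => φ m = k).card
        = (Finset.univ.filter fun m => ψ m = k).card) :
    ∃ e : Equiv.Perm M, ∀ m, φ (e m) = ψ m := by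
  have hc : ∀ k, Fintype.card {m // ψ m = k} = Fintype.card {m // φ m = k} := by
    intro k
    rw [Fintype.card_subtype, Fintype.card_subtype, ← h k]
  refine ⟨((Equiv.sigmaFiberEquiv ψ).symm.trans
    ((Equiv.sigmaCongrRight (fun k => Fintype.equivOfCardEq (hc k))).trans
      (Equiv.sigmaFiberEquiv φ))), fun m => ?_⟩
  simp only [Equiv.trans_apply, Equiv.sigmaFiberEquiv, Equiv.coe_fn_symm_mk,
    Equiv.sigmaCongrRight_apply, Equiv.coe_fn_mk]
  exact (Fintype.equivOfCardEq (hc (ψ m)) ⟨m, rfl⟩).2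

lemma leftFactor_apply {A : Type*} (f : Equiv.Perm (Bool × A)) (i : Bool) (m : A × Bool) :
    leftFactor f (i, m) = ((f (i, m.1)).1, ((f (i, m.1)).2, m.2)) := by
  obtain ⟨a, y⟩ := m
  rfl

lemma rightFactor_apply {A : Type*} (g : Equiv.Perm (A × Bool)) (i : Bool) (m : A × Bool) :
    rightFactor g (i, m) = (i, g m) := rfl

lemma stage {A : Type*} [Fintype A] [DecidableEq A]
    (F : A × Bool → KK) (κ : KK × KK → ℕ)
    (hsum : ∑ q, κ q = Fintype.card A)
    (hmarg : ∀ k, ∑ q, κ q * w1 q k = (Finset.univ.filter fun m => F m = k).card) :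
    ∃ (h : Equiv.Perm (A × Bool)) (t : A → KK × KK),
      (∀ q, (Finset.univ.filter fun a => t a = q).card = κ q) ∧
      ∀ m : A × Bool, F (h m) = pick m.2 (t m.1) := by
  obtain ⟨t, ht⟩ := exists_fn_fibers κ hsum
  have hΦ : ∀ k, (Finset.univ.filter fun m : A × Bool => F m = k).card
      = (Finset.univ.filter fun m : A × Bool => pick m.2 (t m.1) = k).card := by
    intro k
    rw [card_filter_right t (fun q y => pick y q) k, ← hmarg k]
    refine Finset.sum_congr rfl fun q _ => by rw [ht q]; rfl
  obtain ⟨e, he⟩ := exists_perm_comp F (fun m => pick m.2 (t m.1)) hΦ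
  exact ⟨e, t, ht, he⟩

end Aux17

namespace Aux17

lemma umbrella {A : Type*} [Fintype A] [DecidableEq A]
    (c : Bool × A × Bool → Bool)
    (κ₀ κ₁ : KK × KK → ℕ) (e : KK → ℕ)
    (h0sum : ∑ q, κ₀ q = Fintype.card A)
    (h0marg : ∀ k, ∑ q, κ₀ q * w1 q k
      = (Finset.univ.filter fun m : A × Bool => ((c (false, m), c (true, m)) : KK) = k).card)
    (h1sum : ∑ q, κ₁ q = Fintype.card A)
    (h1marg : ∀ k, ∑ q, κ₁ q * w1 q k = ∑ q, κ₀ q * w2 q k)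
    (hesum : ∑ k, e k = Fintype.card A)
    (hemarg : ∀ k, 2 * e k = ∑ q, κ₁ q * w2 q k)
    (hecount : ∑ k, e k * w3 k = Fintype.card A) :
    ∃ σ : Equiv.Perm (Bool × A × Bool), AltDepth σ 4 ∧
      (fun z : Bool × A × Bool => c (σ⁻¹ z)) = (fun z : Bool × A × Bool => z.1) := by
  classical
  -- Stage 1 (first right move)
  obtain ⟨h₀, t₀, ht₀fib, ht₀⟩ :=
    stage (fun m : A × Bool => ((c (false, m), c (true, m)) : KK)) κ₀ h0sum h0marg
  -- Stage 2 (left move): patterns of the coloring after move 1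
  have h1marg' : ∀ k, ∑ q, κ₁ q * w1 q k
      = (Finset.univ.filter fun m : A × Bool => Gm m.2 (t₀ m.1) = k).card := by
    intro k
    rw [card_filter_right t₀ (fun q y => Gm y q) k]
    rw [h1marg k]
    refine Finset.sum_congr rfl fun q _ => by rw [ht₀fib q]; rfl
  obtain ⟨h', t₁, ht₁fib, ht₁⟩ :=
    stage (fun m : A × Bool => Gm m.2 (t₀ m.1)) κ₁ h1sum h1marg'
  set h₁ : Equiv.Perm (Bool × A) :=
    (Equiv.prodComm Bool A).trans (h'.trans (Equiv.prodComm A Bool)) with hh₁def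
  have fact₁ : ∀ p : Bool × A, Gm (h₁ p).1 (t₀ (h₁ p).2) = pick p.1 (t₁ p.2) := by
    intro p
    have h := ht₁ p.swap
    simpa [hh₁def] using h
  -- Stage 3 (second right move)
  set κ₂ : KK × KK → ℕ := fun q => if q.1 = q.2 then e q.1 else 0 with hκ₂
  have h2sum : ∑ q, κ₂ q = Fintype.card A := by
    rw [Fintype.sum_prod_type, ← hesum]
    refine Finset.sum_congr rfl fun k _ => ?_
    simp [hκ₂, Finset.sum_ite_eq]
  have h2marg : ∀ k, ∑ q, κ₂ q * w1 q k
      = (Finset.univ.filter fun m : A × Bool => Gm m.2 (t₁ m.1) = k).card := by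
    intro k
    have lhs : ∑ q, κ₂ q * w1 q k = 2 * e k := by
      rw [Fintype.sum_prod_type]
      have e1 : ∀ k1 : KK, (∑ k2 : KK, κ₂ (k1, k2) * w1 (k1, k2) k)
          = e k1 * w1 (k1, k1) k := by
        intro k1
        have e2 : ∀ k2 : KK, κ₂ (k1, k2) * w1 (k1, k2) k
            = if k1 = k2 then e k1 * w1 (k1, k2) k else 0 := by
          intro k2; by_cases hx : k1 = k2 <;> simp [hκ₂, hx]
        rw [Finset.sum_congr rfl fun k2 _ => e2 k2]
        rw [Finset.sum_ite_eq Finset.univ k1 (fun k2 => e k1 * w1 (k1, k2) k)]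
        simp
      rw [Finset.sum_congr rfl fun k1 _ => e1 k1]
      have e3 : ∀ k1 : KK, e k1 * w1 (k1, k1) k = if k1 = k then 2 * e k1 else 0 := by
        intro k1; by_cases hx : k1 = k <;> simp [w1, hx] <;> ring
      rw [Finset.sum_congr rfl fun k1 _ => e3 k1]
      rw [Finset.sum_ite_eq' Finset.univ k (fun k1 => 2 * e k1)]
      simp
    rw [lhs]
    rw [card_filter_right t₁ (fun q y => Gm y q) k]
    rw [hemarg k]
    refine Finset.sum_congr rfl fun q _ => by rw [ht₁fib q]; rfl
  obtain ⟨h₂, t₂, ht₂fib, ht₂⟩ :=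
    stage (fun m : A × Bool => Gm m.2 (t₁ m.1)) κ₂ h2sum h2marg
  have diag : ∀ x : A, (t₂ x).1 = (t₂ x).2 := by
    intro x
    by_contra hne
    have hmem : x ∈ Finset.univ.filter fun y => t₂ y = t₂ x := by simp
    have hpos : 0 < (Finset.univ.filter fun y => t₂ y = t₂ x).card :=
      Finset.card_pos.mpr ⟨x, hmem⟩
    rw [ht₂fib] at hpos
    simp [hκ₂, hne] at hpos
  set u : A → KK := fun x => (t₂ x).1 with hu
  have hufib : ∀ k, (Finset.univ.filter fun x => u x = k).card = e k := by
    intro k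
    have hset : (Finset.univ.filter fun x => u x = k)
        = (Finset.univ.filter fun x => t₂ x = (k, k)) := by
      ext x
      simp only [Finset.mem_filter, Finset.mem_univ, true_and, hu]
      constructor
      · intro h; exact Prod.ext h (by rw [← diag x]; exact h)
      · intro h; rw [h]
    rw [hset, ht₂fib]
    simp [hκ₂]
  -- Stage 4 (final left move)
  have hd : ∀ bb : Bool, (Finset.univ.filter fun p : Bool × A => p.1 = bb).card
      = (Finset.univ.filter fun p : Bool × A => pick p.1 (u p.2) = bb).card := by
    have hfst : ∀ bb : Bool, (Finset.univ.filter fun p : Bool × A => p.1 = bb).card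
        = Fintype.card A := by
      intro bb
      rw [Finset.card_filter, Fintype.sum_prod_type, Fintype.sum_bool]
      cases bb <;> simp
    have htrue : (Finset.univ.filter fun p : Bool × A => pick p.1 (u p.2) = true).card
        = Fintype.card A := by
      rw [card_filter_left u (fun q i => pick i q) true, ← hecount]
      refine Finset.sum_congr rfl fun q _ => by rw [hufib q]; rfl
    intro bb
    cases bb
    · have hsplit := bool_filter_split (fun p : Bool × A => pick p.1 (u p.2))
      rw [htrue] at hsplit
      rw [hfst false]
      simp [Fintype.card_prod] at hsplit ⊢
      omega
    · rw [hfst true, htrue]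
  obtain ⟨h₃, hh₃⟩ :=
    exists_perm_comp (Prod.fst : Bool × A → Bool) (fun p => pick p.1 (u p.2)) hd
  -- Assemble σ
  set L : List (Equiv.Perm (Bool × A × Bool)) :=
    [leftFactor h₃, rightFactor h₂⁻¹, leftFactor h₁⁻¹, rightFactor h₀⁻¹] with hL
  have key : ∀ w : Bool × A × Bool, (L.prod w).1 = c w := by
    rintro ⟨i, m⟩
    have hσw : L.prod (i, m)
        = leftFactor h₃ (rightFactor h₂⁻¹ (leftFactor h₁⁻¹ (rightFactor h₀⁻¹ (i, m)))) := by
      simp [hL, Equiv.Perm.mul_apply]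
    set m₁ : A × Bool := h₀⁻¹ m with hm₁
    set p₂ : Bool × A := h₁⁻¹ (i, m₁.1) with hp₂
    set m₃ : A × Bool := h₂⁻¹ (p₂.2, m₁.2) with hm₃
    have step : L.prod (i, m) = ((h₃ (p₂.1, m₃.1)).1, ((h₃ (p₂.1, m₃.1)).2, m₃.2)) := by
      rw [hσw]
      rfl
    -- now compute the value
    have v1 : c (i, m) = pick i (pick m₁.2 (t₀ m₁.1)) := by
      have hm : m = h₀ m₁ := by rw [hm₁, ← Equiv.Perm.mul_apply, mul_inv_cancel, Equiv.Perm.one_apply]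
      rw [hm, ← ht₀ m₁]
      cases i <;> rfl
    have v3 : Gm i (t₀ m₁.1) = pick p₂.1 (t₁ p₂.2) := by
      have hp : (i, m₁.1) = h₁ p₂ := by rw [hp₂, ← Equiv.Perm.mul_apply, mul_inv_cancel, Equiv.Perm.one_apply]
      have := fact₁ p₂
      rw [← hp] at this
      exact this
    have v5 : Gm m₁.2 (t₁ p₂.2) = pick m₃.2 (t₂ m₃.1) := by
      have hp : (p₂.2, m₁.2) = h₂ m₃ := by rw [hm₃, ← Equiv.Perm.mul_apply, mul_inv_cancel, Equiv.Perm.one_apply]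
      have := ht₂ m₃
      rw [← hp] at this
      exact this
    have v6 : pick m₃.2 (t₂ m₃.1) = u m₃.1 := by
      rcases hb : m₃.2 with _ | _
      · rfl
      · simp [hu, ← diag m₃.1]
    rw [step, hh₃ (p₂.1, m₃.1)]
    rw [v1, pick_comm i m₁.2, v3, pick_comm m₁.2 p₂.1, v5, v6]
  refine ⟨L.prod, ⟨L, rfl, ?_, rfl⟩, ?_⟩
  · intro π hπ
    simp only [hL, List.mem_cons, List.not_mem_nil, or_false] at hπ
    rcases hπ with h | h | h | h <;> subst h
    · exact Or.inl ⟨h₃, rfl⟩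
    · exact Or.inr ⟨h₂⁻¹, rfl⟩
    · exact Or.inl ⟨h₁⁻¹, rfl⟩
    · exact Or.inr ⟨h₀⁻¹, rfl⟩
  · funext z
    rw [← key (L.prod⁻¹ z), ← Equiv.Perm.mul_apply, mul_inv_cancel, Equiv.Perm.one_apply]

end Aux17

set_option maxHeartbeats 1600000 in
theorem stmt_17 {A : Type*} [Fintype A] [DecidableEq A] (hA : 3 ≤ Fintype.card A)
    (c : Bool × A × Bool → Bool)
    (hfair : (Finset.univ.filter fun z : Bool × A × Bool => c z = false).card =
             (Finset.univ.filter fun z : Bool × A × Bool => c z = true).card) :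
    ∃ σ : Equiv.Perm (Bool × A × Bool), AltDepth σ 4 ∧
      (fun z : Bool × A × Bool => c (σ⁻¹ z)) = (fun z : Bool × A × Bool => z.1) := by
  classical
  obtain ⟨a, ha⟩ : ∃ x, (Finset.univ.filter fun m : A × Bool =>
      ((c (false, m), c (true, m)) : Aux17.KK) = (true, true)).card = x := ⟨_, rfl⟩
  obtain ⟨b, hb⟩ : ∃ x, (Finset.univ.filter fun m : A × Bool =>
      ((c (false, m), c (true, m)) : Aux17.KK) = (true, false)).card = x := ⟨_, rfl⟩
  obtain ⟨c2, hc2⟩ : ∃ x, (Finset.univ.filter fun m : A × Bool =>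
      ((c (false, m), c (true, m)) : Aux17.KK) = (false, true)).card = x := ⟨_, rfl⟩
  obtain ⟨d2, hd2⟩ : ∃ x, (Finset.univ.filter fun m : A × Bool =>
      ((c (false, m), c (true, m)) : Aux17.KK) = (false, false)).card = x := ⟨_, rfl⟩
  have hS : a + b + c2 + d2 = 2 * Fintype.card A := by
    have h := Aux17.sum_comp' (fun m : A × Bool => ((c (false, m), c (true, m)) : Aux17.KK))
      (fun _ => 1)
    simp only [Finset.sum_const, Finset.card_univ, smul_eq_mul, mul_one, Fintype.card_prod,
      Fintype.card_bool] at h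
    rw [Fintype.sum_prod_type] at h
    simp only [Fintype.sum_bool] at h
    rw [ha, hb, hc2, hd2] at h
    omega
  have hT : 2 * a + b + c2 = 2 * Fintype.card A := by
    have htrue : (Finset.univ.filter fun z : Bool × A × Bool => c z = true).card
        = 2 * Fintype.card A := by
      have hsplit := Aux17.bool_filter_split c
      rw [hfair] at hsplit
      simp only [Fintype.card_prod, Fintype.card_bool] at hsplit
      omega
    have h3 : (Finset.univ.filter fun z : Bool × A × Bool => c z = true)
        = (Finset.univ.filter fun z : Bool × (A × Bool) =>
            Aux17.pick z.1 ((c (false, z.2), c (true, z.2)) : Aux17.KK) = true) := by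
      apply Finset.filter_congr
      rintro ⟨i, m⟩ _
      cases i <;> rfl
    have h4 := Aux17.card_filter_left
      (fun m : A × Bool => ((c (false, m), c (true, m)) : Aux17.KK))
      (fun q i => Aux17.pick i q) true
    rw [← h3, htrue] at h4
    rw [Fintype.sum_prod_type] at h4
    simp only [Fintype.sum_bool, Aux17.pick_false, Aux17.pick_true] at h4
    rw [ha, hb, hc2, hd2] at h4
    simp at h4
    omega
  by_cases hbe : b % 2 = 0
  · by_cases hae : a % 2 = 0
    · -- Case C1
      refine Aux17.umbrella c
        (fun q => if q = ((true,true),(true,true)) then a / 2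
          else if q = ((false,false),(false,false)) then a / 2
          else if q = ((true,false),(true,false)) then b / 2
          else if q = ((false,true),(false,true)) then c2 / 2 else 0)
        (fun q => if q = ((true,true),(false,false)) then Fintype.card A else 0)
        (fun k => if k = (true,false) then Fintype.card A else 0)
        ?_ ?_ ?_ ?_ ?_ ?_ ?_
      · simp [Fintype.sum_prod_type, Fintype.sum_bool] <;> omega
      · rintro ⟨k1, k2⟩
        cases k1 <;> cases k2
        · rw [hd2]; simp only [Fintype.sum_prod_type, Fintype.sum_bool, Aux17.w1] <;> simp <;> omega
        · rw [hc2]; simp only [Fintype.sum_prod_type, Fintype.sum_bool, Aux17.w1] <;> simp <;> omega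
        · rw [hb]; simp only [Fintype.sum_prod_type, Fintype.sum_bool, Aux17.w1] <;> simp <;> omega
        · rw [ha]; simp only [Fintype.sum_prod_type, Fintype.sum_bool, Aux17.w1] <;> simp <;> omega
      · simp [Fintype.sum_prod_type, Fintype.sum_bool] <;> omega
      · rintro ⟨k1, k2⟩
        cases k1 <;> cases k2 <;>
          simp [Fintype.sum_prod_type, Fintype.sum_bool, Aux17.w1, Aux17.w2, Aux17.Gm,
            Aux17.pick] <;> omega
      · simp [Fintype.sum_prod_type, Fintype.sum_bool] <;> omega
      · rintro ⟨k1, k2⟩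
        cases k1 <;> cases k2 <;>
          simp [Fintype.sum_prod_type, Fintype.sum_bool, Aux17.w1, Aux17.w2, Aux17.Gm,
            Aux17.pick] <;> omega
      · simp [Fintype.sum_prod_type, Fintype.sum_bool, Aux17.w3] <;> omega
    · -- Case C2
      refine Aux17.umbrella c
        (fun q => if q = ((true,true),(false,false)) then 1 else if q = ((true,true),(true,true)) then (a - 1) / 2 else if q = ((false,false),(false,false)) then (a - 1) / 2 else if q = ((true,false),(true,false)) then b / 2 else if q = ((false,true),(false,true)) then c2 / 2 else 0)
        (fun q => if q = ((true,true),(true,false)) then 2 else if q = ((true,true),(false,false)) then Fintype.card A - 3 else if q = ((false,false),(false,false)) then 1 else 0)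
        (fun k => if k = (true,true) then 1 else if k = (true,false) then Fintype.card A - 2 else if k = (false,false) then 1 else 0)
        ?_ ?_ ?_ ?_ ?_ ?_ ?_
      · simp [Fintype.sum_prod_type, Fintype.sum_bool] <;> omega
      · rintro ⟨k1, k2⟩
        cases k1 <;> cases k2
        · rw [hd2]; simp only [Fintype.sum_prod_type, Fintype.sum_bool, Aux17.w1] <;> simp <;> omega
        · rw [hc2]; simp only [Fintype.sum_prod_type, Fintype.sum_bool, Aux17.w1] <;> simp <;> omega
        · rw [hb]; simp only [Fintype.sum_prod_type, Fintype.sum_bool, Aux17.w1] <;> simp <;> omega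
        · rw [ha]; simp only [Fintype.sum_prod_type, Fintype.sum_bool, Aux17.w1] <;> simp <;> omega
      · simp [Fintype.sum_prod_type, Fintype.sum_bool] <;> omega
      · rintro ⟨k1, k2⟩
        cases k1 <;> cases k2 <;>
          simp [Fintype.sum_prod_type, Fintype.sum_bool, Aux17.w1, Aux17.w2, Aux17.Gm,
          Aux17.pick] <;> omega
      · simp [Fintype.sum_prod_type, Fintype.sum_bool] <;> omega
      · rintro ⟨k1, k2⟩
        cases k1 <;> cases k2 <;>
          simp [Fintype.sum_prod_type, Fintype.sum_bool, Aux17.w1, Aux17.w2, Aux17.Gm,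
          Aux17.pick] <;> omega
      · simp [Fintype.sum_prod_type, Fintype.sum_bool, Aux17.w3] <;> omega
  · by_cases ha0 : a = 0
    · -- Case C5
      refine Aux17.umbrella c
        (fun q => if q = ((true,false),(false,true)) then 1 else if q = ((true,false),(true,false)) then (b - 1) / 2 else if q = ((false,true),(false,true)) then (c2 - 1) / 2 else 0)
        (fun q => if q = ((true,false),(true,true)) then 1 else if q = ((false,true),(true,true)) then 1 else if q = ((true,true),(false,false)) then Fintype.card A - 3 else if q = ((false,false),(false,false)) then 1 else 0)
        (fun k => if k = (true,true) then 1 else if k = (true,false) then Fintype.card A - 3 else if k = (false,true) then 1 else if k = (false,false) then 1 else 0)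
        ?_ ?_ ?_ ?_ ?_ ?_ ?_
      · simp [Fintype.sum_prod_type, Fintype.sum_bool] <;> omega
      · rintro ⟨k1, k2⟩
        cases k1 <;> cases k2
        · rw [hd2]; simp only [Fintype.sum_prod_type, Fintype.sum_bool, Aux17.w1] <;> simp <;> omega
        · rw [hc2]; simp only [Fintype.sum_prod_type, Fintype.sum_bool, Aux17.w1] <;> simp <;> omega
        · rw [hb]; simp only [Fintype.sum_prod_type, Fintype.sum_bool, Aux17.w1] <;> simp <;> omega
        · rw [ha]; simp only [Fintype.sum_prod_type, Fintype.sum_bool, Aux17.w1] <;> simp <;> omega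
      · simp [Fintype.sum_prod_type, Fintype.sum_bool] <;> omega
      · rintro ⟨k1, k2⟩
        cases k1 <;> cases k2 <;>
          simp [Fintype.sum_prod_type, Fintype.sum_bool, Aux17.w1, Aux17.w2, Aux17.Gm,
          Aux17.pick] <;> omega
      · simp [Fintype.sum_prod_type, Fintype.sum_bool] <;> omega
      · rintro ⟨k1, k2⟩
        cases k1 <;> cases k2 <;>
          simp [Fintype.sum_prod_type, Fintype.sum_bool, Aux17.w1, Aux17.w2, Aux17.Gm,
          Aux17.pick] <;> omega
      · simp [Fintype.sum_prod_type, Fintype.sum_bool, Aux17.w3] <;> omega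
    · by_cases hae : a % 2 = 0
      · -- Case C3
        refine Aux17.umbrella c
          (fun q => if q = ((true,false),(true,true)) then 1 else if q = ((false,true),(true,true)) then 1 else if q = ((true,true),(true,true)) then (a - 2) / 2 else if q = ((false,false),(false,false)) then a / 2 else if q = ((true,false),(true,false)) then (b - 1) / 2 else if q = ((false,true),(false,true)) then (c2 - 1) / 2 else 0)
          (fun q => if q = ((true,true),(false,true)) then 2 else if q = ((true,true),(false,false)) then Fintype.card A - 3 else if q = ((false,false),(false,false)) then 1 else 0)
          (fun k => if k = (true,true) then 1 else if k = (true,false) then Fintype.card A - 2 else if k = (false,false) then 1 else 0)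
          ?_ ?_ ?_ ?_ ?_ ?_ ?_
        · simp [Fintype.sum_prod_type, Fintype.sum_bool] <;> omega
        · rintro ⟨k1, k2⟩
          cases k1 <;> cases k2
          · rw [hd2]; simp only [Fintype.sum_prod_type, Fintype.sum_bool, Aux17.w1] <;> simp <;> omega
          · rw [hc2]; simp only [Fintype.sum_prod_type, Fintype.sum_bool, Aux17.w1] <;> simp <;> omega
          · rw [hb]; simp only [Fintype.sum_prod_type, Fintype.sum_bool, Aux17.w1] <;> simp <;> omega
          · rw [ha]; simp only [Fintype.sum_prod_type, Fintype.sum_bool, Aux17.w1] <;> simp <;> omega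
        · simp [Fintype.sum_prod_type, Fintype.sum_bool] <;> omega
        · rintro ⟨k1, k2⟩
          cases k1 <;> cases k2 <;>
            simp [Fintype.sum_prod_type, Fintype.sum_bool, Aux17.w1, Aux17.w2, Aux17.Gm,
            Aux17.pick] <;> omega
        · simp [Fintype.sum_prod_type, Fintype.sum_bool] <;> omega
        · rintro ⟨k1, k2⟩
          cases k1 <;> cases k2 <;>
            simp [Fintype.sum_prod_type, Fintype.sum_bool, Aux17.w1, Aux17.w2, Aux17.Gm,
            Aux17.pick] <;> omega
        · simp [Fintype.sum_prod_type, Fintype.sum_bool, Aux17.w3] <;> omega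
      · -- Case C4
        refine Aux17.umbrella c
          (fun q => if q = ((true,true),(true,false)) then 1 else if q = ((false,false),(false,true)) then 1 else if q = ((true,true),(true,true)) then (a - 1) / 2 else if q = ((false,false),(false,false)) then (a - 1) / 2 else if q = ((true,false),(true,false)) then (b - 1) / 2 else if q = ((false,true),(false,true)) then (c2 - 1) / 2 else 0)
          (fun q => if q = ((true,false),(true,true)) then 1 else if q = ((false,true),(true,true)) then 1 else if q = ((true,true),(false,false)) then Fintype.card A - 3 else if q = ((false,false),(false,false)) then 1 else 0)
          (fun k => if k = (true,true) then 1 else if k = (true,false) then Fintype.card A - 3 else if k = (false,true) then 1 else if k = (false,false) then 1 else 0)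
          ?_ ?_ ?_ ?_ ?_ ?_ ?_
        · simp [Fintype.sum_prod_type, Fintype.sum_bool] <;> omega
        · rintro ⟨k1, k2⟩
          cases k1 <;> cases k2
          · rw [hd2]; simp only [Fintype.sum_prod_type, Fintype.sum_bool, Aux17.w1] <;> simp <;> omega
          · rw [hc2]; simp only [Fintype.sum_prod_type, Fintype.sum_bool, Aux17.w1] <;> simp <;> omega
          · rw [hb]; simp only [Fintype.sum_prod_type, Fintype.sum_bool, Aux17.w1] <;> simp <;> omega
          · rw [ha]; simp only [Fintype.sum_prod_type, Fintype.sum_bool, Aux17.w1] <;> simp <;> omega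
        · simp [Fintype.sum_prod_type, Fintype.sum_bool] <;> omega
        · rintro ⟨k1, k2⟩
          cases k1 <;> cases k2 <;>
            simp [Fintype.sum_prod_type, Fintype.sum_bool, Aux17.w1, Aux17.w2, Aux17.Gm,
            Aux17.pick] <;> omega
        · simp [Fintype.sum_prod_type, Fintype.sum_bool] <;> omega
        · rintro ⟨k1, k2⟩
          cases k1 <;> cases k2 <;>
            simp [Fintype.sum_prod_type, Fintype.sum_bool, Aux17.w1, Aux17.w2, Aux17.Gm,
            Aux17.pick] <;> omega
        · simp [Fintype.sum_prod_type, Fintype.sum_bool, Aux17.w3] <;> omega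
end

section
/- Every balanced permutation on a finite set X with |X| ≥ 2 commutes with some odd permutation of X. -/
open Equiv

private lemma noncommProd_multiset_eq {M : Type*} [Monoid M] {s t : Multiset M} (hs) (ht)
    (h : s = t) : s.noncommProd hs = t.noncommProd ht := by subst h; rfl

lemma exists_odd_commuting_of_two_cycles {X : Type*} [Fintype X] [DecidableEq X]
    (σ : Equiv.Perm X) {k : ℕ} (hk : Odd k) {c c' : Equiv.Perm X}
    (hc : c ∈ σ.cycleFactorsFinset) (hc' : c' ∈ σ.cycleFactorsFinset) (hne : c ≠ c')
    (hkc : c.support.card = k) (hkc' : c'.support.card = k) :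
    ∃ τ : Equiv.Perm X, Equiv.Perm.sign τ = -1 ∧ σ * τ = τ * σ := by
  classical
  have hcyc : c.IsCycle := (Equiv.Perm.mem_cycleFactorsFinset_iff.mp hc).1
  have hcyc' : c'.IsCycle := (Equiv.Perm.mem_cycleFactorsFinset_iff.mp hc').1
  obtain ⟨a, ha1, -⟩ := hcyc
  obtain ⟨b, hb1, -⟩ := hcyc'
  have ha : a ∈ c.support := Equiv.Perm.mem_support.mpr ha1
  have hb : b ∈ c'.support := Equiv.Perm.mem_support.mpr hb1
  have hdisj : _root_.Disjoint c.support c'.support :=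
    Equiv.Perm.disjoint_iff_disjoint_support.mp
      (σ.cycleFactorsFinset_pairwise_disjoint hc hc' hne)
  have hca : c = σ.cycleOf a := Equiv.Perm.cycle_is_cycleOf ha hc
  have hcb : c' = σ.cycleOf b := Equiv.Perm.cycle_is_cycleOf hb hc'
  have hσa : σ a ≠ a := by
    rw [← (Equiv.Perm.mem_cycleFactorsFinset_iff.mp hc).2 a ha]; exact ha1
  have hσb : σ b ≠ b := by
    rw [← (Equiv.Perm.mem_cycleFactorsFinset_iff.mp hc').2 b hb]; exact hb1
  have hmema : ∀ n : ℕ, (σ ^ n) a ∈ c.support := by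
    intro n
    rw [hca] at ha ⊢
    rw [← Equiv.Perm.cycleOf_pow_apply_self]
    exact Equiv.Perm.pow_apply_mem_support.mpr ha
  have hmemb : ∀ n : ℕ, (σ ^ n) b ∈ c'.support := by
    intro n
    rw [hcb] at hb ⊢
    rw [← Equiv.Perm.cycleOf_pow_apply_self]
    exact Equiv.Perm.pow_apply_mem_support.mpr hb
  have hkeya : ∀ m n : ℕ, ((σ ^ m) a = (σ ^ n) a ↔ m % k = n % k) := by
    intro m n
    have h := Equiv.Perm.zpow_eq_zpow_on_iff σ (m := (m : ℤ)) (n := (n : ℤ)) hσa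
    rw [← hca, hkc] at h
    rw [← zpow_natCast σ m, ← zpow_natCast σ n, h]
    omega
  have hkeyb : ∀ m n : ℕ, ((σ ^ m) b = (σ ^ n) b ↔ m % k = n % k) := by
    intro m n
    have h := Equiv.Perm.zpow_eq_zpow_on_iff σ (m := (m : ℤ)) (n := (n : ℤ)) hσb
    rw [← hcb, hkc'] at h
    rw [← zpow_natCast σ m, ← zpow_natCast σ n, h]
    omega
  have hab : ∀ m n : ℕ, (σ ^ m) a ≠ (σ ^ n) b := by
    intro m n h
    exact (Finset.disjoint_left.mp hdisj (hmema m)) (h ▸ hmemb n)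
  set f : ℕ → Equiv.Perm X := fun i => Equiv.swap ((σ ^ i) a) ((σ ^ i) b) with hf
  have hfmod : ∀ i : ℕ, f i = f (i % k) := by
    intro i
    have h1 : (σ ^ i) a = (σ ^ (i % k)) a := (hkeya i (i % k)).mpr (Nat.mod_mod_of_dvd i dvd_rfl).symm
    have h2 : (σ ^ i) b = (σ ^ (i % k)) b := (hkeyb i (i % k)).mpr (Nat.mod_mod_of_dvd i dvd_rfl).symm
    simp only [hf, h1, h2]
  have hcomm : ∀ i j : ℕ, Commute (f i) (f j) := by
    intro i j
    by_cases h : i % k = j % k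
    · have : f i = f j := by rw [hfmod i, hfmod j, h]
      rw [this]
    · apply Equiv.Perm.Disjoint.commute
      rw [Equiv.Perm.disjoint_iff_disjoint_support, Equiv.Perm.support_swap (hab i i),
        Equiv.Perm.support_swap (hab j j), Finset.disjoint_left]
      intro x hx hx'
      simp only [Finset.mem_insert, Finset.mem_singleton] at hx hx'
      rcases hx with rfl | rfl <;> rcases hx' with h' | h'
      · exact h ((hkeya i j).mp h')
      · exact hab i j h'
      · exact hab j i h'.symm
      · exact h ((hkeyb i j).mp h')
  set τ : Equiv.Perm X :=
    (Finset.range k).noncommProd f (fun i _ j _ _ => hcomm i j) with hτ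
  have hsign : Equiv.Perm.sign τ = -1 := by
    rw [hτ, Finset.map_noncommProd (Finset.range k) f (fun i _ j _ _ => hcomm i j) Equiv.Perm.sign,
      Finset.noncommProd_eq_prod]
    have : ∀ i ∈ Finset.range k, Equiv.Perm.sign (f i) = -1 :=
      fun i _ => Equiv.Perm.sign_swap (hab i i)
    rw [Finset.prod_congr rfl this, Finset.prod_const, Finset.card_range]
    exact Odd.neg_one_pow hk
  refine ⟨τ, hsign, ?_⟩
  rw [← mul_inv_eq_iff_eq_mul]
  have h2 : ∀ i ∈ Finset.range k, (MulAut.conj σ) (f i) = f (i + 1) := by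
    intro i _
    simp only [MulAut.conj_apply, hf]
    rw [← Equiv.swap_apply_apply]
    rw [pow_succ' σ i, Equiv.Perm.mul_apply, Equiv.Perm.mul_apply]
  have h1 : σ * τ * σ⁻¹ = (Finset.range k).noncommProd (fun i => f (i + 1))
      (fun i _ j _ _ => hcomm (i + 1) (j + 1)) := by
    have := Finset.map_noncommProd (Finset.range k) f (fun i _ j _ _ => hcomm i j)
      (MulAut.conj σ : Equiv.Perm X ≃* Equiv.Perm X)
    calc σ * τ * σ⁻¹ = (MulAut.conj σ) τ := by simp [MulAut.conj_apply]
    _ = _ := by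
        rw [hτ, this]
        exact Finset.noncommProd_congr rfl h2 _
  rw [h1]
  obtain ⟨m, rfl⟩ : ∃ m, k = m + 1 := ⟨k - 1, by have := hk.pos; omega⟩
  have hmul : Multiset.map (fun i => f (i + 1)) (Finset.range (m + 1)).val =
      Multiset.map f (Finset.range (m + 1)).val := by
    rw [Finset.range_val]
    have hr : Multiset.range (m + 1) = 0 ::ₘ Multiset.map Nat.succ (Multiset.range m) := by
      have hl := List.range_succ_eq_map (n := m)
      simp [Multiset.range, hl]
    conv_lhs => rw [Multiset.range_succ]
    conv_rhs => rw [hr]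
    have hfm : f (m + 1) = f 0 := by rw [hfmod (m + 1), Nat.mod_self]
    simp only [Multiset.map_cons, Multiset.map_map]
    show f (m + 1) ::ₘ _ = f 0 ::ₘ _
    rw [hfm]
    rfl
  exact noncommProd_multiset_eq _ _ hmul

theorem stmt_19' {X : Type*} [Fintype X] [DecidableEq X] (hX : 2 ≤ Fintype.card X)
    (σ : Equiv.Perm X) (hσ : ∀ k : ℕ, 2 ≤ k → Even (σ.cycleType.count k)) :
    ∃ τ : Equiv.Perm X, Equiv.Perm.sign τ = -1 ∧ σ * τ = τ * σ := by
  classical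
  by_cases h1 : σ = 1
  · obtain ⟨a, b, hab⟩ := Fintype.exists_pair_of_one_lt_card hX
    exact ⟨Equiv.swap a b, Equiv.Perm.sign_swap hab, by rw [h1, one_mul, mul_one]⟩
  by_cases h2 : ∃ k ∈ σ.cycleType, Even k
  · -- a cycle of even length is itself an odd permutation commuting with σ
    obtain ⟨k, hk, hke⟩ := h2
    rw [Equiv.Perm.cycleType_def, Multiset.mem_map] at hk
    obtain ⟨c, hc, hck⟩ := hk
    rw [← Finset.mem_def] at hc
    refine ⟨c, ?_, (Equiv.Perm.self_mem_cycle_factors_commute hc).symm.eq⟩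
    rw [(Equiv.Perm.mem_cycleFactorsFinset_iff.mp hc).1.sign]
    simp only [Function.comp_apply] at hck
    rw [hck, hke.neg_one_pow]
  · -- all cycles have odd length; find two of the same length k
    have hne : σ.cycleType ≠ 0 := fun h => h1 (Equiv.Perm.cycleType_eq_zero.mp h)
    obtain ⟨k, hk⟩ := Multiset.exists_mem_of_ne_zero hne
    have hodd : Odd k := Nat.odd_iff.mpr (by
      rcases Nat.even_or_odd k with h | h
      · exact absurd ⟨k, hk, h⟩ h2
      · exact Nat.odd_iff.mp h)
    have hcount : 2 ≤ σ.cycleType.count k := by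
      have h1' : 1 ≤ σ.cycleType.count k := Multiset.one_le_count_iff_mem.mpr hk
      obtain ⟨r, hr⟩ := hσ k (Equiv.Perm.two_le_of_mem_cycleType hk)
      omega
    -- translate the count into a Finset of cycle factors
    have hcard : 2 ≤ (σ.cycleFactorsFinset.filter (fun c => c.support.card = k)).card := by
      rw [Equiv.Perm.cycleType_def, Multiset.count_map] at hcount
      have he : (σ.cycleFactorsFinset.filter (fun c => c.support.card = k)).card =
          Multiset.card (Multiset.filter (fun a => k = (Finset.card ∘ Equiv.Perm.support) a)
            σ.cycleFactorsFinset.val) := by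
        rw [Finset.card, Finset.filter_val]
        congr 1
        apply Multiset.filter_congr
        intro x _
        simp [eq_comm, Function.comp]
      rw [he]
      exact hcount
    obtain ⟨c, hcmem, c', hcmem', hne'⟩ := Finset.one_lt_card.mp hcard
    rw [Finset.mem_filter] at hcmem hcmem'
    exact exists_odd_commuting_of_two_cycles σ hodd hcmem.1 hcmem'.1 hne' hcmem.2 hcmem'.2


theorem stmt_19 {X : Type*} [Fintype X] [DecidableEq X] (hX : 2 ≤ Fintype.card X)
    (σ : Equiv.Perm X) (hσ : PermBalanced σ) :
    ∃ τ : Equiv.Perm X, Equiv.Perm.sign τ = -1 ∧ σ * τ = τ * σ := by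
  exact stmt_19' hX σ hσ
end
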